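/- Modulo the span of all boundary divisor classes of R̄_{2i+1} other than δ_0′, δ_0″, δ_0^ram, the class of the closed difference Prym divisor is determined up to a positive constant c by the two vanishing conditions Ξ^s · [D̄_{2i+1}] = 0 and Ξ^ns · [D̄_{2i+1}] = 0: namely [D̄_{2i+1}] = c( (3i+1)λ − (i/2)(δ_0′ + δ_0″) − ((2i+1)/4) δ_0^ram − ⋯ ) in Pic(R̄_{2i+1}) ⊗ ℚ. -/
import Mathlib


/-- The rational divisor class theory of Cornalba's compactification `R̄_g` of the
Prym moduli space: the rational Picard group `Cl` with the Hodge class `λ` and the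
boundary classes `δ₀', δ₀'', δ₀^{ram}`, the span `otherBoundary` of all the
remaining boundary divisor classes, and the group of one-cycle (curve) classes
with the intersection pairing. -/
structure RBarPicQ where
  Cl : Type
  [clGroup : AddCommGroup Cl]
  [clModule : Module ℚ Cl]
  lambdaCl : Cl
  del0' : Cl
  del0'' : Cl
  del0ram : Cl
  /-- the span of all boundary divisor classes other than `δ₀', δ₀'', δ₀^{ram}` -/
  otherBoundary : Submodule ℚ Cl
  OneCycle : Type
  pair : OneCycle → Cl →ₗ[ℚ] ℚ

attribute [instance] RBarPicQ.clGroup RBarPicQ.clModule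

/-- **Corollary 1.4.** Modulo the span of all boundary divisor classes of
`R̄_{2i+1}` other than `δ₀', δ₀'', δ₀^{ram}`, the class of the closed difference
Prym divisor `D̄_{2i+1}` (written as `a·λ + b·(δ₀' + δ₀'') + d·δ₀^{ram}` modulo the
other boundary, with positive `λ`-coefficient) is determined, up to a positive
constant `c`, by the two vanishing conditions `Ξ^s · [D̄_{2i+1}] = 0` and
`Ξ^{ns} · [D̄_{2i+1}] = 0`, where `Ξ^s`, `Ξ^{ns}` are the two Nikulin pencils with
intersection numbers `Ξ^s·λ = 2i+2`, `Ξ^s·δ₀' = 12i+8`, `Ξ^s·δ₀'' = 0`,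
`Ξ^s·δ₀^{ram} = 8` and `Ξ^{ns}·λ = 2i+1`, `Ξ^{ns}·δ₀' = 12i+6`, `Ξ^{ns}·δ₀'' = 0`,
`Ξ^{ns}·δ₀^{ram} = 4` (and vanishing intersection with the other boundary
classes): namely
`[D̄_{2i+1}] = c((3i+1)λ - (i/2)(δ₀' + δ₀'') - ((2i+1)/4)δ₀^{ram} - ⋯)`. -/
theorem diff_prym_divisor_class_determined (i : ℕ) (hi : 1 ≤ i)
    (M : RBarPicQ) (DbarCl : M.Cl) (xiS xiNS : M.OneCycle)
    -- intersection numbers of the standard Nikulin pencil `Ξ^s`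
    (hSl : M.pair xiS M.lambdaCl = 2 * (i : ℚ) + 2)
    (hS0' : M.pair xiS M.del0' = 12 * (i : ℚ) + 8)
    (hS0'' : M.pair xiS M.del0'' = 0)
    (hSram : M.pair xiS M.del0ram = 8)
    (hSother : ∀ β ∈ M.otherBoundary, M.pair xiS β = 0)
    -- intersection numbers of the non-standard Nikulin pencil `Ξ^{ns}`
    (hNSl : M.pair xiNS M.lambdaCl = 2 * (i : ℚ) + 1)
    (hNS0' : M.pair xiNS M.del0' = 12 * (i : ℚ) + 6)
    (hNS0'' : M.pair xiNS M.del0'' = 0)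
    (hNSram : M.pair xiNS M.del0ram = 4)
    (hNSother : ∀ β ∈ M.otherBoundary, M.pair xiNS β = 0)
    -- the class of `D̄_{2i+1}`, modulo the other boundary classes, with equal
    -- `δ₀'`- and `δ₀''`-coefficients and positive `λ`-coefficient
    (a b d : ℚ) (ha : 0 < a)
    (hexp : DbarCl - (a • M.lambdaCl + b • (M.del0' + M.del0'') + d • M.del0ram)
      ∈ M.otherBoundary)
    -- the two vanishing conditions
    (hvS : M.pair xiS DbarCl = 0)
    (hvNS : M.pair xiNS DbarCl = 0) :
    ∃ c : ℚ, 0 < c ∧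
      DbarCl - c • ((3 * (i : ℚ) + 1) • M.lambdaCl
        - ((i : ℚ) / 2) • (M.del0' + M.del0'')
        - ((2 * (i : ℚ) + 1) / 4) • M.del0ram) ∈ M.otherBoundary := by

  have h3 : (3 * (i : ℚ) + 1) ≠ 0 := by positivity
  have hβS := hSother _ hexp
  have hβNS := hNSother _ hexp
  simp only [map_sub, map_add, map_smul, hSl, hS0', hS0'', hSram, hNSl, hNS0', hNS0'',
    hNSram, hvS, hvNS, smul_eq_mul] at hβS hβNS
  -- hβS : 0 - (a*(2i+2) + b*((12i+8)+0) + d*8) = 0, similarly hβNS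
  refine ⟨a / (3 * (i : ℚ) + 1), by positivity, ?_⟩
  have hb : b = -((i : ℚ) * a) / (2 * (3 * (i : ℚ) + 1)) := by
    field_simp
    linarith [hβS, hβNS]
  have hd : d = -((2 * (i : ℚ) + 1) * a) / (4 * (3 * (i : ℚ) + 1)) := by
    field_simp
    linear_combination (-(3 * (i : ℚ) + 3 / 2)) * hβS + (3 * (i : ℚ) + 2) * hβNS
  have key : (a / (3 * (i : ℚ) + 1)) • ((3 * (i : ℚ) + 1) • M.lambdaCl
        - ((i : ℚ) / 2) • (M.del0' + M.del0'')
        - ((2 * (i : ℚ) + 1) / 4) • M.del0ram)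
      = a • M.lambdaCl + b • (M.del0' + M.del0'') + d • M.del0ram := by
    rw [hb, hd]
    match_scalars <;> field_simp <;> ring
  rw [key]
  exact hexp
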